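/- Let V be a finite-dimensional complex vector space, let N be a nilpotent linear endomorphism of V, and let x ∈ V. If M₁ and M₂ are N-invariant subspaces of V such that M₁ + M₂ = (N)_x, then M₁ = (N)_x or M₂ = (N)_x. -/
import Mathlib


open Submodule

/-- A subspace `M` is invariant under the endomorphism `A`. -/
def InvSub {V : Type*} [AddCommGroup V] [Module ℂ V] (A : V →ₗ[ℂ] V)
    (M : Submodule ℂ V) : Prop :=
  M.map A ≤ M

/-- `T ∈ Col(A)`: `T` is bijective and a subspace is `A`-invariant iff its image
under `T` is `A`-invariant. -/
def Col {V : Type*} [AddCommGroup V] [Module ℂ V] (A T : V →ₗ[ℂ] V) : Prop :=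
  Function.Bijective T ∧ ∀ M : Submodule ℂ V, InvSub A M ↔ InvSub A (M.map T)

/-- The cyclic subspace `(A)_x`, i.e. the span of `{A^n x : n ≥ 0}`. -/
def cyc {V : Type*} [AddCommGroup V] [Module ℂ V] (A : V →ₗ[ℂ] V) (x : V) :
    Submodule ℂ V :=
  Submodule.span ℂ (Set.range fun n : ℕ => (A ^ n) x)

section Aux

open Polynomial

variable {V : Type*} [AddCommGroup V] [Module ℂ V]

lemma pow_mem_aux (N : V →ₗ[ℂ] V) {M : Submodule ℂ V} (hM : InvSub N M)
    {m : V} (hm : m ∈ M) (n : ℕ) : (N ^ n) m ∈ M := by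
  induction n with
  | zero => simpa using hm
  | succ n ih =>
    have : N ((N ^ n) m) ∈ M := hM (Submodule.mem_map_of_mem ih)
    simpa [pow_succ', Module.End.mul_apply] using this

lemma aeval_mem_aux (N : V →ₗ[ℂ] V) {M : Submodule ℂ V} (hM : InvSub N M)
    (p : ℂ[X]) {m : V} (hm : m ∈ M) : (Polynomial.aeval N p) m ∈ M := by
  induction p using Polynomial.induction_on' with
  | add p q hp hq => simpa [map_add] using M.add_mem hp hq
  | monomial n a =>
    have := M.smul_mem a (pow_mem_aux N hM hm n)
    simpa [Polynomial.aeval_monomial, Module.End.mul_apply,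
      Module.algebraMap_end_apply] using this

lemma mem_cyc_self (N : V →ₗ[ℂ] V) (x : V) : x ∈ cyc N x :=
  Submodule.subset_span ⟨0, by simp⟩

lemma cyc_le_of_mem (N : V →ₗ[ℂ] V) {M : Submodule ℂ V} (hM : InvSub N M)
    {x : V} (hx : x ∈ M) : cyc N x ≤ M := by
  rw [cyc, Submodule.span_le]
  rintro _ ⟨n, rfl⟩
  exact pow_mem_aux N hM hx n

lemma cyc_le_sup (N : V →ₗ[ℂ] V) (x : V) :
    cyc N x ≤ Submodule.span ℂ {x} ⊔ cyc N (N x) := by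
  rw [cyc, Submodule.span_le]
  rintro _ ⟨n, rfl⟩
  cases n with
  | zero => exact Submodule.mem_sup_left (by simpa using Submodule.mem_span_singleton_self x)
  | succ n =>
    refine Submodule.mem_sup_right (Submodule.subset_span ⟨n, ?_⟩)
    simp [pow_succ, Module.End.mul_apply]

/-- Key lemma: if `x = m + w` with `m ∈ M` (`N`-invariant) and `w ∈ (N)_{Nx}`,
then `x ∈ M`. -/
lemma lemA (N : V →ₗ[ℂ] V) (hN : IsNilpotent N) {M : Submodule ℂ V}
    (hM : InvSub N M) {x m w : V} (hm : m ∈ M) (hw : w ∈ cyc N (N x))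
    (hx : x = m + w) : x ∈ M := by
  rw [cyc] at hw
  rw [Finsupp.mem_span_range_iff_exists_finsupp] at hw
  obtain ⟨c, hc⟩ := hw
  set q : ℂ[X] := c.sum fun i a => Polynomial.C a * Polynomial.X ^ i with hq
  set p : ℂ[X] := Polynomial.X * q with hp
  have hpx : (Polynomial.aeval N p) x = w := by
    rw [← hc, hp, hq, map_mul, Finsupp.sum, map_sum, Polynomial.aeval_X,
      Module.End.mul_apply, LinearMap.sum_apply, map_sum, Finsupp.sum]
    refine Finset.sum_congr rfl fun i _ => ?_
    have h1 : N ((N ^ i) x) = (N ^ i) (N x) := by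
      rw [← Module.End.mul_apply, ← Module.End.mul_apply, ← pow_succ', ← pow_succ]
    simp [map_mul, Polynomial.aeval_C, map_pow, Polynomial.aeval_X,
      Module.End.mul_apply, Module.algebraMap_end_apply, map_smul, h1]
  obtain ⟨k, hk⟩ := hN
  set y : V →ₗ[ℂ] V := Polynomial.aeval N p with hy
  have hyk : y ^ k = 0 := by
    rw [hy, ← map_pow, hp, mul_pow, map_mul, map_pow, Polynomial.aeval_X, hk, zero_mul]
  have hgeom : (∑ i ∈ Finset.range k, y ^ i) * (1 - y) = 1 := by
    have := geom_sum_mul y k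
    rw [hyk] at this
    have h2 : (∑ i ∈ Finset.range k, y ^ i) * (y - 1) = -1 := by simpa using this
    calc (∑ i ∈ Finset.range k, y ^ i) * (1 - y)
        = -((∑ i ∈ Finset.range k, y ^ i) * (y - 1)) := by
          rw [mul_sub, mul_sub, mul_one, neg_sub]
      _ = 1 := by rw [h2, neg_neg]
  have hxm : (1 - y) x = m := by
    rw [LinearMap.sub_apply, Module.End.one_apply, hpx, hx, add_sub_cancel_right]
  have hxS : x = (∑ i ∈ Finset.range k, y ^ i) m := by
    rw [← hxm, ← Module.End.mul_apply, hgeom, Module.End.one_apply]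
  rw [hxS]
  have hS : (∑ i ∈ Finset.range k, y ^ i)
      = Polynomial.aeval N (∑ i ∈ Finset.range k, p ^ i) := by
    rw [map_sum]; simp [hy, map_pow]
  rw [hS]
  exact aeval_mem_aux N hM _ hm

end Aux

theorem stmt3 {V : Type*} [AddCommGroup V] [Module ℂ V] [FiniteDimensional ℂ V]
    (N : V →ₗ[ℂ] V) (hN : IsNilpotent N) (x : V)
    (M₁ M₂ : Submodule ℂ V) (hM₁ : InvSub N M₁) (hM₂ : InvSub N M₂)
    (hsum : M₁ ⊔ M₂ = cyc N x) :
    M₁ = cyc N x ∨ M₂ = cyc N x := by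
  have hxW : x ∈ M₁ ⊔ M₂ := hsum ▸ mem_cyc_self N x
  obtain ⟨m₁, hm₁, m₂, hm₂, hx12⟩ := Submodule.mem_sup.1 hxW
  have hle1 : M₁ ≤ cyc N x := hsum ▸ le_sup_left
  have hle2 : M₂ ≤ cyc N x := hsum ▸ le_sup_right
  obtain ⟨u₁, hu₁, w₁, hw₁, h1⟩ := Submodule.mem_sup.1 (cyc_le_sup N x (hle1 hm₁))
  obtain ⟨a, rfl⟩ := Submodule.mem_span_singleton.1 hu₁
  obtain ⟨u₂, hu₂, w₂, hw₂, h2⟩ := Submodule.mem_sup.1 (cyc_le_sup N x (hle2 hm₂))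
  obtain ⟨b, rfl⟩ := Submodule.mem_span_singleton.1 hu₂
  by_cases hab : a + b = 1
  · have hne : a ≠ 0 ∨ b ≠ 0 := by
      by_contra h
      push_neg at h
      rw [h.1, h.2, add_zero] at hab
      exact zero_ne_one hab
    rcases hne with ha | hb
    · have hx' : x = a⁻¹ • m₁ + (-(a⁻¹ • w₁)) := by
        rw [← h1, smul_add, smul_smul, inv_mul_cancel₀ ha, one_smul]
        abel
      have hxM : x ∈ M₁ := lemA N hN hM₁ (M₁.smul_mem _ hm₁)
        ((cyc N (N x)).neg_mem ((cyc N (N x)).smul_mem _ hw₁)) hx'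
      exact Or.inl (le_antisymm hle1 (cyc_le_of_mem N hM₁ hxM))
    · have hx' : x = b⁻¹ • m₂ + (-(b⁻¹ • w₂)) := by
        rw [← h2, smul_add, smul_smul, inv_mul_cancel₀ hb, one_smul]
        abel
      have hxM : x ∈ M₂ := lemA N hN hM₂ (M₂.smul_mem _ hm₂)
        ((cyc N (N x)).neg_mem ((cyc N (N x)).smul_mem _ hw₂)) hx'
      exact Or.inr (le_antisymm hle2 (cyc_le_of_mem N hM₂ hxM))
  · have h3 : a • x + w₁ + (b • x + w₂) = x := by rw [h1, h2, hx12]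
    have h4 : (1 - (a + b)) • x = w₁ + w₂ := by
      rw [sub_smul, one_smul, add_smul]
      calc x - (a • x + b • x)
          = (a • x + w₁ + (b • x + w₂)) - (a • x + b • x) := by rw [h3]
        _ = w₁ + w₂ := by abel
    have hcoef : (1 : ℂ) - (a + b) ≠ 0 := sub_ne_zero.2 fun h => hab h.symm
    have hw : x ∈ cyc N (N x) := by
      have hx' : x = (1 - (a + b))⁻¹ • (w₁ + w₂) := by
        rw [← h4, smul_smul, inv_mul_cancel₀ hcoef, one_smul]
      have hmem := Submodule.smul_mem (cyc N (N x)) (1 - (a + b))⁻¹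
        (Submodule.add_mem _ hw₁ hw₂)
      rwa [← hx'] at hmem
    have hbot : InvSub N (⊥ : Submodule ℂ V) := by simp [InvSub]
    have hx0 : x = 0 := by
      have := lemA N hN hbot (Submodule.zero_mem ⊥) hw (by rw [zero_add])
      simpa using this
    have hcyc0 : cyc N x = ⊥ := by
      rw [hx0]
      refine le_antisymm ?_ bot_le
      rw [cyc, Submodule.span_le]
      rintro _ ⟨n, rfl⟩
      simp
    left
    rw [hcyc0]
    exact le_antisymm (hcyc0 ▸ hle1) bot_le
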